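/- The ordered Bell numbers satisfy a(n) = ∑_{k=0}^{n−1} 2^k · A(n,k) for all n ≥ 1, where A(n,k) are the Eulerian numbers. -/

import Mathlib

open Finset

/-- Stirling numbers of the second kind. -/
def stirling : ℕ → ℕ → ℕ
  | 0, 0 => 1
  | 0, _ + 1 => 0
  | _ + 1, 0 => 0
  | n + 1, k + 1 => (k + 1) * stirling n (k + 1) + stirling n k

/-- The ordered Bell (Fubini) numbers. -/
def fubini (n : ℕ) : ℕ := ∑ k ∈ Finset.range (n + 1), k.factorial * stirling n k

/-- Eulerian numbers `A(n,k)`: permutations of `[n]` with `k` descents. -/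
def eulerian : ℕ → ℕ → ℕ
  | 0, 0 => 1
  | 0, _ + 1 => 0
  | _ + 1, 0 => 1
  | n + 1, k + 1 => (n + 1 - (k + 1)) * eulerian n k + (k + 2) * eulerian n (k + 1)

/-- `L` is an ordered set partition of `Fin n`: a list of nonempty, pairwise
disjoint blocks whose union is everything. -/
def IsOSP {n : ℕ} (L : List (Finset (Fin n))) : Prop :=
  (∀ B ∈ L, B.Nonempty) ∧ L.Pairwise Disjoint ∧ ∀ x : Fin n, ∃ B ∈ L, x ∈ B

lemma stirling_eq_zero (n : ℕ) : ∀ k, n < k → stirling n k = 0 := by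
  induction n with
  | zero => intro k h; match k, h with | k + 1, _ => rfl
  | succ n ih =>
    intro k h
    match k, h with
    | k + 1, h => show (k+1) * stirling n (k+1) + stirling n k = 0
                  rw [ih (k+1) (by omega), ih k (by omega)]; ring

lemma stirling_self (n : ℕ) : stirling n n = 1 := by
  induction n with
  | zero => rfl
  | succ n ih =>
    show (n+1) * stirling n (n+1) + stirling n n = 0 + 1
    rw [ih, stirling_eq_zero n (n+1) (by omega)]; ring

lemma stirling_zero (n : ℕ) (hn : 1 ≤ n) : stirling n 0 = 0 := by
  match n with
  | m + 1 => rfl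

lemma eulerian_eq_zero (n : ℕ) : ∀ k, 1 ≤ n → n ≤ k → eulerian n k = 0 := by
  induction n with
  | zero => omega
  | succ n ih =>
    intro k h1 h2
    match k, h2 with
    | k + 1, h2 =>
      show (n + 1 - (k + 1)) * eulerian n k + (k + 2) * eulerian n (k + 1) = 0
      have h3 : n + 1 - (k + 1) = 0 := by omega
      rcases Nat.eq_zero_or_pos n with h | h
      · subst h; simp [h3, eulerian]
      · rw [h3, ih (k+1) h (by omega)]; ring

lemma choose_identity (k j : ℕ) :
    k * k.choose j = j * k.choose j + (j + 1) * k.choose (j + 1) := by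
  rcases le_or_gt j k with h | h
  · rw [mul_comm (j+1), Nat.choose_succ_right_eq]
    have : j + (k - j) = k := by omega
    nlinarith [Nat.choose_succ_right_eq k j]
  · rw [Nat.choose_eq_zero_of_lt h, Nat.choose_eq_zero_of_lt (by omega)]
    ring

lemma eulerian_sum_succ (n : ℕ) (hn : 1 ≤ n) (f : ℕ → ℕ) :
    ∑ k ∈ range (n + 1), eulerian (n + 1) k * f k
    = ∑ k ∈ range n, eulerian n k * ((n - k) * f (k + 1) + (k + 1) * f k) := by
  rw [Finset.sum_range_succ']
  have h1 : ∀ k ∈ range n, eulerian (n+1) (k+1) * f (k+1)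
      = eulerian n k * ((n - k) * f (k+1)) + (k+1+1) * (eulerian n (k+1) * f (k+1)) := by
    intro k hk
    show ((n + 1 - (k + 1)) * eulerian n k + (k + 2) * eulerian n (k + 1)) * f (k+1) = _
    have : n + 1 - (k + 1) = n - k := by omega
    rw [this]; ring
  rw [Finset.sum_congr rfl h1, Finset.sum_add_distrib]
  have h2 : ∑ k ∈ range n, (k+1+1) * (eulerian n (k+1) * f (k+1)) + eulerian (n+1) 0 * f 0
      = ∑ k ∈ range n, (k+1) * (eulerian n k * f k) := by
    have h3 := Finset.sum_range_succ' (fun k => (k+1) * (eulerian n k * f k)) n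
    have h4 := Finset.sum_range_succ (fun k => (k+1) * (eulerian n k * f k)) n
    rw [eulerian_eq_zero n n hn le_rfl] at h4
    have h5 : eulerian (n+1) 0 = 1 := rfl
    have h6 : eulerian n 0 = 1 := by match n with | m + 1 => rfl
    simp only [h5, h6] at *
    omega
  rw [add_assoc, h2, ← Finset.sum_add_distrib]
  exact Finset.sum_congr rfl fun k _ => by ring

lemma sum_eulerian (n : ℕ) (hn : 1 ≤ n) :
    ∑ k ∈ range n, eulerian n k = n.factorial := by
  induction n, hn using Nat.le_induction with
  | base => rfl
  | succ n hn ih =>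
    have h := eulerian_sum_succ n hn (fun _ => 1)
    simp only [mul_one] at h
    have h2 : ∀ k ∈ range n, eulerian n k * (n - k + (k + 1))
        = (n + 1) * eulerian n k := by
      intro k hk
      simp only [mem_range] at hk
      have : n - k + (k + 1) = n + 1 := by omega
      rw [this]; ring
    rw [Finset.sum_congr rfl h2, ← Finset.mul_sum, ih] at h
    rw [h, Nat.factorial_succ]

lemma choose_term_eq (n k m j : ℕ) (hk : k < n) (hn : n = m + 1 + j) :
    (n - k) * (k + 1).choose (m + 1) + (k + 1) * k.choose (m + 1)
    = (j + 1) * (k.choose (m + 1) + k.choose m) := by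
  rw [Nat.choose_succ_succ]
  have hid := choose_identity k m
  rcases le_or_gt m k with h | h
  · have hs := Nat.choose_succ_right_eq k m
    -- (m+1) * C(k,m+1) = (k-m) * C(k,m)
    simp only [Nat.succ_eq_add_one] at *
    zify [h, Nat.le_of_lt hk] at *
    linear_combination hs + ((k.choose m : ℤ) + (k.choose (m+1) : ℤ)) * hn
  · rw [Nat.choose_eq_zero_of_lt h, Nat.choose_eq_zero_of_lt (by omega)]
    ring

lemma key (n : ℕ) (hn : 1 ≤ n) : ∀ m : ℕ,
    ∑ k ∈ range n, eulerian n k * k.choose m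
    = (n - m).factorial * stirling n (n - m) := by
  induction n, hn using Nat.le_induction with
  | base =>
    intro m
    match m with
    | 0 => rfl
    | m + 1 => simp [stirling_zero 1 le_rfl]
  | succ n hn ih =>
    intro m
    match m with
    | 0 =>
      simp only [Nat.choose_zero_right, mul_one, Nat.sub_zero]
      rw [sum_eulerian (n+1) (by omega), stirling_self]
      ring
    | m + 1 =>
      rcases le_or_gt (m + 1) n with hm | hm
      · -- main case
        obtain ⟨j, hj⟩ : ∃ j, n = m + 1 + j := ⟨n - (m+1), by omega⟩
        rw [eulerian_sum_succ n hn (fun k => k.choose (m+1))]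
        have h1 : ∀ k ∈ range n,
            eulerian n k * ((n - k) * (k+1).choose (m+1) + (k+1) * k.choose (m+1))
            = (j + 1) * (eulerian n k * k.choose (m+1) + eulerian n k * k.choose m) := by
          intro k hk
          simp only [mem_range] at hk
          rw [choose_term_eq n k m j hk hj]; ring
        rw [Finset.sum_congr rfl h1, ← Finset.mul_sum, Finset.sum_add_distrib,
          ih (m+1), ih m]
        have e1 : n - (m + 1) = j := by omega
        have e2 : n - m = j + 1 := by omega
        have e3 : n + 1 - (m + 1) = j + 1 := by omega
        rw [e1, e2, e3]
        show (j+1) * (j.factorial * stirling n j + (j+1).factorial * stirling n (j+1))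
          = (j+1).factorial * ((j + 1) * stirling n (j + 1) + stirling n j)
        rw [Nat.factorial_succ]; ring
      · -- m + 1 > n : both sides zero
        have h1 : ∀ k ∈ range (n + 1), eulerian (n+1) k * k.choose (m+1) = 0 := by
          intro k hk
          simp only [mem_range] at hk
          rcases le_or_gt k n with h | h
          · rw [Nat.choose_eq_zero_of_lt (by omega)]; ring
          · omega
        rw [Finset.sum_congr rfl h1, Finset.sum_const, smul_zero]
        have : n + 1 - (m + 1) = 0 := by omega
        rw [this, stirling_zero (n+1) (by omega)]
        ring

theorem fubini_eq_sum_eulerian (n : ℕ) (hn : 1 ≤ n) :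
    fubini n = ∑ k ∈ Finset.range n, 2 ^ k * eulerian n k := by
  have h1 : fubini n = ∑ m ∈ range (n + 1), (n - m).factorial * stirling n (n - m) := by
    have := Finset.sum_range_reflect (fun k => k.factorial * stirling n k) (n + 1)
    simp only [Nat.add_sub_cancel] at this
    exact this.symm
  rw [h1]
  have h2 : ∀ m ∈ range (n + 1), (n - m).factorial * stirling n (n - m)
      = ∑ k ∈ range n, eulerian n k * k.choose m := fun m _ => (key n hn m).symm
  rw [Finset.sum_congr rfl h2, Finset.sum_comm]
  refine Finset.sum_congr rfl fun k hk => ?_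
  simp only [mem_range] at hk
  rw [← Finset.mul_sum]
  have h3 : ∑ m ∈ range (n + 1), k.choose m = 2 ^ k := by
    rw [← Finset.sum_subset (Finset.range_subset_range.2 (by omega : k + 1 ≤ n + 1))
      (fun x _ hx => Nat.choose_eq_zero_of_lt (by simp only [mem_range] at *; omega))]
    exact Nat.sum_range_choose k
  rw [h3, mul_comm]
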